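/- Hedge with an approximate oracle: suppose I ≥ 2, let 0 < ε ≤ M and δ ≥ 0, set η = ε/M² and T = ⌈2·M²·ln(I)/ε²⌉, and run the Hedge algorithm against a sequence θ_1,…,θ_T in which each θ_t is a δ-approximate best response to p_t, i.e. f(p_t) − δ ≤ R(p_t,θ_t) ≤ f(p_t). Then the averaged output satisfies sup_{θ∈Θ} R(p̄_T,θ) ≤ v̄ + ε + δ, where p̄_T = (1/T)·Σ_{t=1}^T p_t and v̄ = inf_{p∈Δ} f(p). -/

import Mathlib

open Finset

lemma exp_neg_le_quadratic (x : ℝ) (hx : 0 ≤ x) :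
    Real.exp (-x) ≤ 1 - x + x ^ 2 / 2 := by
  have key : ∀ y : ℝ, HasDerivAt (fun z : ℝ => 1 - z + z ^ 2 / 2 - Real.exp (-z))
      (-1 + y + Real.exp (-y)) y := by
    intro y
    have h1 : HasDerivAt (fun z : ℝ => Real.exp (-z)) (-Real.exp (-y)) y := by
      simpa using (hasDerivAt_neg y).exp
    have h2 : HasDerivAt (fun z : ℝ => 1 - z + z ^ 2 / 2) (-1 + y) y := by
      have h3 : HasDerivAt (fun z : ℝ => z ^ 2 / 2) y y := by
        simpa using (hasDerivAt_pow 2 y).div_const 2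
      have h4 : HasDerivAt (fun z : ℝ => 1 - z) (-1 : ℝ) y := by
        simpa using (hasDerivAt_id y).const_sub 1
      exact h4.add h3
    have := h2.sub h1; simp only [sub_neg_eq_add] at this; exact this
  have mono : MonotoneOn (fun z : ℝ => 1 - z + z ^ 2 / 2 - Real.exp (-z)) (Set.Ici 0) := by
    apply monotoneOn_of_deriv_nonneg (convex_Ici (0:ℝ))
    · exact Continuous.continuousOn (by continuity)
    · intro y _; exact (key y).differentiableAt.differentiableWithinAt
    · intro y _
      rw [(key y).deriv]
      have := Real.add_one_le_exp (-y)
      linarith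
  have h0 := mono (Set.self_mem_Ici) (Set.mem_Ici.mpr hx) hx
  simp [Real.exp_zero] at h0
  linarith

/-- Hedge with a `δ`-approximate best-response oracle: with `η = ε/M²` and
`T = ⌈2 M² ln I / ε²⌉`, if each `θ_t` satisfies
`f(p_t) − δ ≤ R(p_t,θ_t) ≤ f(p_t)`, then the averaged output satisfies
`sup_θ R(p̄_T,θ) ≤ v̄ + ε + δ`. -/
theorem hedge_approximate_oracle
    (I : ℕ) (hI : 2 ≤ I) (Θ : Type*) [Nonempty Θ] (M : ℝ) (hM : 0 < M)
    (R : Fin I → Θ → ℝ) (hR : ∀ i θ, 0 ≤ R i θ ∧ R i θ ≤ M)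
    (ε : ℝ) (hε0 : 0 < ε) (hεM : ε ≤ M) (δ : ℝ) (hδ : 0 ≤ δ)
    (η : ℝ) (hη : η = ε / M ^ 2)
    (T : ℕ) (hT : T = ⌈2 * M ^ 2 * Real.log I / ε ^ 2⌉₊)
    (θ : ℕ → Θ) (w : ℕ → Fin I → ℝ) (p : ℕ → Fin I → ℝ)
    (hw0 : ∀ i, w 0 i = 1)
    (hw : ∀ t i, w (t + 1) i = w t i * Real.exp (-η * R i (θ (t + 1))))
    (hp : ∀ t i, p (t + 1) i = w t i / ∑ j, w t j)
    (hbr : ∀ t ∈ Finset.Icc 1 T,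
      (⨆ θ' : Θ, ∑ i, p t i * R i θ') - δ ≤ ∑ i, p t i * R i (θ t)
        ∧ ∑ i, p t i * R i (θ t) ≤ ⨆ θ' : Θ, ∑ i, p t i * R i θ') :
    (⨆ θ' : Θ, ∑ i, ((1 / (T : ℝ)) * ∑ t ∈ Finset.Icc 1 T, p t i) * R i θ')
      ≤ sInf {v : ℝ | ∃ q : Fin I → ℝ, (∀ i, 0 ≤ q i) ∧ ∑ i, q i = 1 ∧
          v = ⨆ θ' : Θ, ∑ i, q i * R i θ'} + ε + δ := by
  have hI0 : 0 < I := by omega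
  haveI : NeZero I := ⟨by omega⟩
  have hη0 : 0 < η := by rw [hη]; positivity
  have hlogI : 0 < Real.log I := Real.log_pos (by exact_mod_cast by omega)
  have hT0 : 0 < T := by
    rw [hT]
    apply Nat.ceil_pos.mpr
    positivity
  have hTpos : (0:ℝ) < T := by exact_mod_cast hT0
  -- explicit formula for w
  have hwf : ∀ t i, w t i = Real.exp (-η * ∑ s ∈ Finset.Icc 1 t, R i (θ s)) := by
    intro t
    induction t with
    | zero => intro i; simp [hw0]
    | succ n ih =>
      intro i
      rw [hw n i, ih i, ← Real.exp_add, Finset.sum_Icc_succ_top (by omega)]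
      congr 1
      ring
  have hwpos : ∀ t i, 0 < w t i := fun t i => by rw [hwf]; exact Real.exp_pos _
  have hS : ∀ t, 0 < ∑ j, w t j :=
    fun t => Finset.sum_pos (fun j _ => hwpos t j) Finset.univ_nonempty
  have hppos : ∀ t i, 0 ≤ p (t+1) i := by
    intro t i; rw [hp]; exact div_nonneg (hwpos t i).le (hS t).le
  have hpsum : ∀ t, ∑ i, p (t+1) i = 1 := by
    intro t
    simp only [hp]
    rw [← Finset.sum_div, div_self (hS t).ne']
  -- simplex bounds
  have hub : ∀ (q : Fin I → ℝ), (∀ i, 0 ≤ q i) → ∑ i, q i = 1 →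
      ∀ θ' : Θ, ∑ i, q i * R i θ' ≤ M := by
    intro q hq hqs θ'
    calc ∑ i, q i * R i θ' ≤ ∑ i, q i * M :=
          Finset.sum_le_sum fun i _ => mul_le_mul_of_nonneg_left (hR i θ').2 (hq i)
      _ = M := by rw [← Finset.sum_mul, hqs, one_mul]
  have hbdd : ∀ (q : Fin I → ℝ), (∀ i, 0 ≤ q i) → ∑ i, q i = 1 →
      BddAbove (Set.range fun θ' : Θ => ∑ i, q i * R i θ') := by
    intro q hq hqs
    refine ⟨M, ?_⟩
    rintro v ⟨θ', rfl⟩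
    exact hub q hq hqs θ'
  -- one-step potential bound
  have hstep : ∀ t : ℕ, ∑ j, w (t+1) j ≤ (∑ j, w t j) *
      Real.exp (-η * (∑ i, p (t+1) i * R i (θ (t+1))) + η^2 * M^2 / 2) := by
    intro t
    have hSpos := hS t
    have h1 : ∑ j, w (t+1) j
        = (∑ j, w t j) * ∑ j, p (t+1) j * Real.exp (-η * R j (θ (t+1))) := by
      rw [Finset.mul_sum]
      refine Finset.sum_congr rfl fun j _ => ?_
      rw [hw t j, hp t j]
      field_simp
    rw [h1]
    apply mul_le_mul_of_nonneg_left _ hSpos.le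
    have h2 : ∀ j, Real.exp (-η * R j (θ (t+1))) ≤ 1 - η * R j (θ (t+1)) + η^2 * M^2 / 2 := by
      intro j
      have hx : 0 ≤ η * R j (θ (t+1)) := mul_nonneg hη0.le (hR j _).1
      have hq := exp_neg_le_quadratic (η * R j (θ (t+1))) hx
      have hsq : (η * R j (θ (t+1)))^2 ≤ η^2 * M^2 := by
        rw [mul_pow]
        exact mul_le_mul_of_nonneg_left
          (pow_le_pow_left₀ (hR j _).1 (hR j _).2 2) (sq_nonneg η)
      rw [neg_mul] at *
      linarith
    calc ∑ j, p (t+1) j * Real.exp (-η * R j (θ (t+1)))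
        ≤ ∑ j, p (t+1) j * (1 - η * R j (θ (t+1)) + η^2*M^2/2) :=
          Finset.sum_le_sum fun j _ => mul_le_mul_of_nonneg_left (h2 j) (hppos t j)
      _ = ∑ j, (p (t+1) j - η * (p (t+1) j * R j (θ (t+1))) + p (t+1) j * (η^2*M^2/2)) := by
          refine Finset.sum_congr rfl fun j _ => ?_; ring
      _ = 1 - η * (∑ i, p (t+1) i * R i (θ (t+1))) + η^2*M^2/2 := by
          rw [Finset.sum_add_distrib, Finset.sum_sub_distrib, ← Finset.mul_sum,
            ← Finset.sum_mul, hpsum t]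
          ring
      _ ≤ Real.exp (-η * (∑ i, p (t+1) i * R i (θ (t+1))) + η^2*M^2/2) := by
          have := Real.add_one_le_exp (-η * (∑ i, p (t+1) i * R i (θ (t+1))) + η^2*M^2/2)
          linarith
  -- iterated potential bound
  have hpot : ∀ n : ℕ, ∑ j, w n j ≤
      I * Real.exp (-η * (∑ t ∈ Finset.Icc 1 n, ∑ i, p t i * R i (θ t)) + n * (η^2*M^2/2)) := by
    intro n
    induction n with
    | zero =>
      rw [show Finset.Icc 1 0 = (∅ : Finset ℕ) from Finset.Icc_eq_empty (by omega)]
      simp [hw0]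
    | succ n ih =>
      calc ∑ j, w (n+1) j
          ≤ (∑ j, w n j) *
            Real.exp (-η * (∑ i, p (n+1) i * R i (θ (n+1))) + η^2*M^2/2) := hstep n
        _ ≤ (I * Real.exp (-η * (∑ t ∈ Finset.Icc 1 n, ∑ i, p t i * R i (θ t))
              + n * (η^2*M^2/2))) *
            Real.exp (-η * (∑ i, p (n+1) i * R i (θ (n+1))) + η^2*M^2/2) :=
          mul_le_mul_of_nonneg_right ih (Real.exp_pos _).le
        _ = I * Real.exp (-η * (∑ t ∈ Finset.Icc 1 (n+1), ∑ i, p t i * R i (θ t))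
              + (n+1 : ℕ) * (η^2*M^2/2)) := by
          rw [mul_assoc, ← Real.exp_add]
          congr 1
          rw [Finset.sum_Icc_succ_top (by omega)]
          push_cast
          ring
  set G : ℝ := ∑ t ∈ Finset.Icc 1 T, ∑ i, p t i * R i (θ t) with hG
  -- regret bound against each expert i
  have hkey : ∀ i, η * G ≤ η * (∑ t ∈ Finset.Icc 1 T, R i (θ t))
      + Real.log I + T * (η^2*M^2/2) := by
    intro i
    have hlow : Real.exp (-η * ∑ t ∈ Finset.Icc 1 T, R i (θ t)) ≤ ∑ j, w T j := by
      rw [← hwf T i]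
      exact Finset.single_le_sum (fun j _ => (hwpos T j).le) (Finset.mem_univ i)
    have h := le_trans hlow (hpot T)
    have hIcast : (0:ℝ) < I := by exact_mod_cast hI0
    have hlog := Real.log_le_log (Real.exp_pos _) h
    rw [Real.log_exp, Real.log_mul hIcast.ne' (Real.exp_ne_zero _), Real.log_exp] at hlog
    linarith
  -- main per-q bound
  have main : ∀ q : Fin I → ℝ, (∀ i, 0 ≤ q i) → (∑ i, q i = 1) →
      (⨆ θ' : Θ, ∑ i, ((1 / (T : ℝ)) * ∑ t ∈ Finset.Icc 1 T, p t i) * R i θ')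
        ≤ (⨆ θ' : Θ, ∑ i, q i * R i θ') + ε + δ := by
    intro q hq hqs
    set fq : ℝ := ⨆ θ' : Θ, ∑ i, q i * R i θ' with hfq
    have hqL : ∑ i, q i * ∑ t ∈ Finset.Icc 1 T, R i (θ t) ≤ (T:ℝ) * fq := by
      have e3 : ∑ i, q i * ∑ t ∈ Finset.Icc 1 T, R i (θ t)
          = ∑ t ∈ Finset.Icc 1 T, ∑ i, q i * R i (θ t) := by
        simp only [Finset.mul_sum]
        rw [Finset.sum_comm]
      rw [e3]
      calc ∑ t ∈ Finset.Icc 1 T, ∑ i, q i * R i (θ t) ≤ ∑ t ∈ Finset.Icc 1 T, fq :=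
            Finset.sum_le_sum fun t _ => le_ciSup (hbdd q hq hqs) (θ t)
        _ = (T:ℝ) * fq := by
            rw [Finset.sum_const, Nat.card_Icc, Nat.add_sub_cancel, nsmul_eq_mul]
    have hsum2 : η * G ≤ η * ((T:ℝ) * fq) + Real.log I + T * (η^2*M^2/2) := by
      have h1 : ∑ i, q i * (η * G) ≤
          ∑ i, q i * (η * (∑ t ∈ Finset.Icc 1 T, R i (θ t))
            + Real.log I + T * (η^2*M^2/2)) :=
        Finset.sum_le_sum fun i _ => mul_le_mul_of_nonneg_left (hkey i) (hq i)
      have e1 : ∑ i, q i * (η * G) = η * G := by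
        rw [← Finset.sum_mul, hqs, one_mul]
      have e2 : ∑ i, q i * (η * (∑ t ∈ Finset.Icc 1 T, R i (θ t))
            + Real.log I + T * (η^2*M^2/2))
          = η * (∑ i, q i * ∑ t ∈ Finset.Icc 1 T, R i (θ t))
            + Real.log I + T * (η^2*M^2/2) := by
        calc ∑ i, q i * (η * (∑ t ∈ Finset.Icc 1 T, R i (θ t))
              + Real.log I + T * (η^2*M^2/2))
            = ∑ i, (η * (q i * ∑ t ∈ Finset.Icc 1 T, R i (θ t))
              + q i * (Real.log I + T * (η^2*M^2/2))) :=
              Finset.sum_congr rfl fun i _ => by ring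
          _ = η * (∑ i, q i * ∑ t ∈ Finset.Icc 1 T, R i (θ t))
              + (∑ i, q i) * (Real.log I + T * (η^2*M^2/2)) := by
              rw [Finset.sum_add_distrib, ← Finset.mul_sum, ← Finset.sum_mul]
          _ = _ := by rw [hqs]; ring
      rw [e1, e2] at h1
      have h4 := mul_le_mul_of_nonneg_left hqL hη0.le
      linarith
    have hA : ∀ θ' : Θ, ∑ i, ((1 / (T : ℝ)) * ∑ t ∈ Finset.Icc 1 T, p t i) * R i θ'
        ≤ (1/(T:ℝ)) * G + δ := by
      intro θ'
      have e : (∑ i, ((1/(T:ℝ)) * ∑ t ∈ Finset.Icc 1 T, p t i) * R i θ')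
          = ∑ t ∈ Finset.Icc 1 T, (1/(T:ℝ)) * ∑ i, p t i * R i θ' := by
        simp only [Finset.mul_sum, Finset.sum_mul, mul_assoc]
        rw [Finset.sum_comm]
      rw [e]
      have hterm : ∀ t ∈ Finset.Icc 1 T,
          ∑ i, p t i * R i θ' ≤ (∑ i, p t i * R i (θ t)) + δ := by
        intro t ht
        obtain ⟨s, rfl⟩ : ∃ s, t = s + 1 := by
          rcases Finset.mem_Icc.mp ht with ⟨h1t, _⟩
          exact ⟨t - 1, by omega⟩
        have hb := (hbr _ ht).1
        have hle : ∑ i, p (s+1) i * R i θ' ≤ ⨆ θ'' : Θ, ∑ i, p (s+1) i * R i θ'' :=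
          le_ciSup (hbdd (p (s+1)) (hppos s) (hpsum s)) θ'
        linarith
      calc ∑ t ∈ Finset.Icc 1 T, (1/(T:ℝ)) * ∑ i, p t i * R i θ'
          ≤ ∑ t ∈ Finset.Icc 1 T, (1/(T:ℝ)) * ((∑ i, p t i * R i (θ t)) + δ) :=
            Finset.sum_le_sum fun t ht =>
              mul_le_mul_of_nonneg_left (hterm t ht) (by positivity)
        _ = (1/(T:ℝ)) * (G + (T:ℝ) * δ) := by
            rw [← Finset.mul_sum]
            congr 1
            rw [Finset.sum_add_distrib, Finset.sum_const, Nat.card_Icc,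
              Nat.add_sub_cancel, nsmul_eq_mul, ← hG]
        _ = (1/(T:ℝ)) * G + δ := by
            field_simp
    have hTle : 2 * M ^ 2 * Real.log I / ε ^ 2 ≤ (T:ℝ) := by
      rw [hT]; exact Nat.le_ceil _
    have hεne : (ε:ℝ) ≠ 0 := hε0.ne'
    have hMne : (M:ℝ) ≠ 0 := hM.ne'
    have h2' : Real.log I ≤ ε/2 * (η * (T:ℝ)) := by
      have hc := mul_le_mul_of_nonneg_left hTle (show (0:ℝ) ≤ ε/2*η by positivity)
      calc Real.log I = ε/2*η*(2*M^2*Real.log I/ε^2) := by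
            rw [hη]; field_simp
        _ ≤ ε/2*η*(T:ℝ) := hc
        _ = ε/2*(η*(T:ℝ)) := by ring
    have e : (T:ℝ)*(η^2*M^2/2) = η * ((T:ℝ) * (ε/2)) := by
      rw [hη]; field_simp
    have h4 : η * G ≤ η * ((T:ℝ) * (fq + ε)) := by nlinarith [hsum2, h2', e]
    have h5 : G ≤ (T:ℝ) * (fq + ε) := le_of_mul_le_mul_left h4 hη0
    have h6 : (1/(T:ℝ)) * G ≤ fq + ε := by
      calc (1/(T:ℝ)) * G ≤ (1/(T:ℝ)) * ((T:ℝ) * (fq + ε)) :=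
            mul_le_mul_of_nonneg_left h5 (by positivity)
        _ = fq + ε := by field_simp
    refine ciSup_le fun θ' => ?_
    have := hA θ'
    linarith
  -- conclude via the infimum
  have hne : Set.Nonempty {v : ℝ | ∃ q : Fin I → ℝ, (∀ i, 0 ≤ q i) ∧ ∑ i, q i = 1 ∧
      v = ⨆ θ' : Θ, ∑ i, q i * R i θ'} := by
    refine ⟨_, (fun i => if i = (⟨0, hI0⟩ : Fin I) then (1:ℝ) else 0), fun i => ?_, ?_, rfl⟩
    · dsimp only
      split <;> norm_num
    · simp only [Finset.sum_ite_eq', Finset.mem_univ, if_true]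
  have hlb : (⨆ θ' : Θ, ∑ i, ((1 / (T : ℝ)) * ∑ t ∈ Finset.Icc 1 T, p t i) * R i θ') - ε - δ
      ≤ sInf {v : ℝ | ∃ q : Fin I → ℝ, (∀ i, 0 ≤ q i) ∧ ∑ i, q i = 1 ∧
          v = ⨆ θ' : Θ, ∑ i, q i * R i θ'} := by
    apply le_csInf hne
    rintro v ⟨q, hq1, hq2, rfl⟩
    have := main q hq1 hq2
    linarith
  linarith
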